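/- If p is an odd prime, then v_{(p+3)/2 + i} ≡ 0 (mod p) for every integer i with 0 ≤ i ≤ (p-3)/2. -/

import Mathlib

open Polynomial Finset

noncomputable def v (n : ℕ) : ℤ :=
  if n = 0 then -1 else
  ((1 - X) * ∏ j ∈ Finset.range (2 * n - 2),
      (C ((2 * n : ℤ) - 3 - (j : ℤ)) + C (j : ℤ) * X)).coeff (n - 1)

section Aux

variable {p : ℕ} [Fact p.Prime]

private lemma prodA : ∏ a : ZMod p, (X - C a) = X ^ p - X := by
  have hcard : Fintype.card (ZMod p) = p := ZMod.card p
  have h1 : 1 < p := (Fact.out : p.Prime).one_lt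
  have hroots := FiniteField.roots_X_pow_card_sub_X (ZMod p)
  rw [hcard] at hroots
  have hmonic : (X ^ p - X : (ZMod p)[X]).Monic :=
    monic_X_pow_sub (by simpa using (Nat.cast_lt (α := WithBot ℕ)).mpr h1)
  have hdeg := FiniteField.X_pow_card_sub_X_natDegree_eq (ZMod p) h1
  have := prod_multiset_X_sub_C_of_monic_of_roots_card_eq hmonic
    (by rw [hroots, hdeg]; simp [hcard])
  rw [hroots] at this
  rw [← this]
  rfl

private lemma prodB : ∏ a ∈ univ \ {(0 : ZMod p)}, (X - C a) = X ^ (p - 1) - 1 := by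
  have h1 : 1 < p := (Fact.out : p.Prime).one_lt
  have h := prodA (p := p)
  rw [Finset.prod_eq_mul_prod_sdiff_singleton_of_mem (mem_univ (0 : ZMod p))
    (fun a => X - C a)] at h
  simp only [C_0, sub_zero] at h
  have h2 : (X : (ZMod p)[X]) ^ p - X = X * (X ^ (p - 1) - 1) := by
    rw [mul_sub, mul_one, ← pow_succ']
    congr 2
    omega
  rw [h2] at h
  exact mul_left_cancel₀ X_ne_zero h

private lemma prodB' :
    ∏ a ∈ univ \ {(0 : ZMod p)}, (X - 1 - C a) = (X - 1) ^ (p - 1) - 1 := by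
  have h := congrArg (aeval (X - 1 : (ZMod p)[X])) (prodB (p := p))
  simp only [map_prod, map_sub, map_pow, map_one, aeval_X, aeval_C, algebraMap_eq] at h
  exact h

private lemma wilson : ∏ a ∈ univ \ {(0 : ZMod p)}, a = -1 := by
  have h := congrArg (eval 0) (prodB (p := p))
  have h1 : 1 < p := (Fact.out : p.Prime).one_lt
  simp only [eval_prod, eval_sub, eval_X, eval_C, eval_pow, eval_one, zero_sub,
    zero_pow (by omega : p - 1 ≠ 0)] at h
  have h2 : ∏ a ∈ univ \ {(0 : ZMod p)}, (-a) = ∏ a ∈ univ \ {(0 : ZMod p)}, a := by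
    refine Finset.prod_nbij' (fun a => -a) (fun a => -a) ?_ ?_ ?_ ?_ ?_ <;>
      simp +contextual [neg_eq_zero]
  rw [h2] at h
  linear_combination h

private lemma key {c : ZMod p} (hc : c ≠ 0) :
    (1 - X) * ∏ a : ZMod p, (C c + C a * (X - 1)) = C c * (X ^ p - X) := by
  rw [Finset.prod_eq_mul_prod_sdiff_singleton_of_mem (mem_univ (0 : ZMod p))]
  have hcongr : ∀ a ∈ univ \ {(0 : ZMod p)},
      C c + C a * (X - 1) = C a * ((X - 1) - C (-(a⁻¹ * c))) := by
    intro a ha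
    simp only [mem_sdiff, mem_singleton, mem_univ, true_and] at ha
    rw [map_neg, sub_neg_eq_add, mul_add, ← C_mul, mul_inv_cancel_left₀ ha]
    ring
  rw [Finset.prod_congr rfl hcongr, Finset.prod_mul_distrib]
  have hre : ∏ a ∈ univ \ {(0 : ZMod p)}, ((X - 1) - C (-(a⁻¹ * c)))
      = ∏ b ∈ univ \ {(0 : ZMod p)}, ((X : (ZMod p)[X]) - 1 - C b) := by
    refine Finset.prod_nbij' (fun a => -(a⁻¹ * c)) (fun b => -(b⁻¹ * c)) ?_ ?_ ?_ ?_ ?_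
    · intro a ha
      simp only [mem_sdiff, mem_singleton, mem_univ, true_and] at ha ⊢
      simp [neg_eq_zero, mul_eq_zero, inv_eq_zero, ha, hc]
    · intro a ha
      simp only [mem_sdiff, mem_singleton, mem_univ, true_and] at ha ⊢
      simp [neg_eq_zero, mul_eq_zero, inv_eq_zero, ha, hc]
    · intro a ha
      simp only [mem_sdiff, mem_singleton, mem_univ, true_and] at ha
      field_simp
    · intro b hb
      simp only [mem_sdiff, mem_singleton, mem_univ, true_and] at hb
      field_simp
    · intro a _; rfl
  rw [hre, prodB', ← map_prod, wilson]
  have e1 : ((X : (ZMod p)[X]) - 1) ^ p = X ^ p - 1 := by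
    have := sub_pow_char (x := (X : (ZMod p)[X])) (y := 1) (p := p)
    simpa using this
  have e2 : ((X : (ZMod p)[X]) - 1) * (X - 1) ^ (p - 1) = (X - 1) ^ p := by
    rw [← pow_succ']
    congr 1
    have := (Fact.out : p.Prime).one_lt
    omega
  simp only [map_zero, zero_mul, add_zero, map_neg, map_one]
  linear_combination (C c) * e2 + (C c) * e1

end Aux

theorem v_zero_block_first_col (p i : ℕ) (hp : p.Prime) (hodd : Odd p)
    (hi : i ≤ (p - 3) / 2) :
    v ((p + 3) / 2 + i) ≡ 0 [ZMOD (p : ℤ)] := by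
  haveI : Fact p.Prime := ⟨hp⟩
  obtain ⟨q, hq⟩ := hodd
  have hp2 := hp.two_le
  have hq1 : 1 ≤ q := by omega
  have hiq : i < q := by omega
  set m := (p + 3) / 2 + i with hmdef
  have hm' : m = q + 2 + i := by omega
  have hm0 : m ≠ 0 := by omega
  suffices h : ((v m : ℤ) : ZMod p) = 0 by
    exact (Int.modEq_zero_iff_dvd).mpr ((ZMod.intCast_zmod_eq_zero_iff_dvd _ p).mp h)
  rw [v, if_neg hm0]
  have hcm : ((((1 - X) * ∏ j ∈ Finset.range (2 * m - 2),
      (C ((2 * m : ℤ) - 3 - (j : ℤ)) + C (j : ℤ) * X)).coeff (m - 1) : ℤ) : ZMod p)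
      = (((1 - X) * ∏ j ∈ Finset.range (2 * m - 2),
      (C ((2 * m : ℤ) - 3 - (j : ℤ)) + C (j : ℤ) * X)).map
        (Int.castRingHom (ZMod p))).coeff (m - 1) := by rw [coeff_map, eq_intCast]
  rw [hcm]
  simp only [Polynomial.map_mul, Polynomial.map_sub, Polynomial.map_one, Polynomial.map_X,
    Polynomial.map_prod, Polynomial.map_add, map_C, Int.coe_castRingHom]
  rcases Nat.eq_zero_or_pos i with hi0 | hipos
  · -- i = 0 : the factor at j = p vanishes mod p
    have hpmem : p ∈ Finset.range (2 * m - 2) := by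
      rw [Finset.mem_range]; omega
    rw [Finset.prod_eq_zero hpmem ?_]
    · simp
    · have h1 : (2 * (m:ℤ) - 3 - (p : ℤ)) = 0 := by
        have hmz : (m:ℤ) = q + 2 := by exact_mod_cast by omega
        have hpz : (p:ℤ) = 2*q+1 := by exact_mod_cast hq
        rw [hmz, hpz]; ring
      rw [h1]
      have h2 : (((p:ℕ):ℤ) : ZMod p) = 0 := by
        push_cast
        exact ZMod.natCast_self p
      rw [h2]
      simp
  · -- main case: i ≥ 1
    set c : ZMod p := ((2 * i : ℕ) : ZMod p) with hc
    have hcne : c ≠ 0 := by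
      rw [hc, Ne, ZMod.natCast_eq_zero_iff]
      intro hdvd
      have := Nat.le_of_dvd (by omega) hdvd
      omega
    have h2m : 2 * m - 2 = p + (2 * i + 1) := by omega
    rw [h2m, Finset.prod_range_add]
    have hB1 : (∏ j ∈ Finset.range p,
        (C ((2 * (m:ℤ) - 3 - (j : ℤ) : ℤ) : ZMod p) + C ((j : ℤ) : ZMod p) * X))
        = ∏ a : ZMod p, (C c + C a * (X - 1)) := by
      have hstep : ∀ j ∈ Finset.range p,
          (C ((2 * (m:ℤ) - 3 - (j : ℤ) : ℤ) : ZMod p) + C ((j : ℤ) : ZMod p) * X)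
          = C c + C (((j:ℕ) : ZMod p)) * (X - 1) := by
        intro j _
        have hconst : ((2 * (m:ℤ) - 3 - (j : ℤ) : ℤ) : ZMod p) = c - ((j:ℕ) : ZMod p) := by
          have h1 : (2 * (m:ℤ) - 3 - (j : ℤ)) = (p : ℤ) + (2*i : ℕ) - (j:ℕ) := by
            push_cast; omega
          rw [h1, hc]
          push_cast [ZMod.natCast_self]
          ring
        have hj2 : ((j : ℤ) : ZMod p) = ((j:ℕ) : ZMod p) := by push_cast; ring
        rw [hconst, hj2, map_sub]
        ring
      rw [Finset.prod_congr rfl hstep]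
      refine Finset.prod_nbij' (fun j => ((j:ℕ) : ZMod p)) (fun a => a.val) ?_ ?_ ?_ ?_ ?_
      · intro a _; exact Finset.mem_univ _
      · intro a _; rw [Finset.mem_range]; exact ZMod.val_lt a
      · intro a ha; rw [Finset.mem_range] at ha; exact ZMod.val_cast_of_lt ha
      · intro a _; exact ZMod.natCast_rightInverse a
      · intro a _; rfl
    rw [hB1, ← mul_assoc, key hcne]
    set B2 : (ZMod p)[X] := ∏ x ∈ Finset.range (2*i+1),
      (C ((2 * (m:ℤ) - 3 - ((p + x : ℕ) : ℤ) : ℤ) : ZMod p)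
        + C (((p + x : ℕ) : ℤ) : ZMod p) * X) with hB2
    have hfac : ∀ (a b : ZMod p), (C a + C b * X).natDegree ≤ 1 := fun a b =>
      (natDegree_add_le _ _).trans (by
        simp only [natDegree_C]
        exact max_le (by omega) ((natDegree_C_mul_le _ _).trans natDegree_X_le))
    have hdeg : B2.natDegree ≤ 2 * i := by
      rw [hB2, Finset.prod_range_succ']
      refine le_trans natDegree_mul_le ?_
      have h0 : ((((p + 0 : ℕ) : ℤ)) : ZMod p) = 0 := by push_cast [ZMod.natCast_self]; ring
      rw [h0]
      simp only [map_zero, zero_mul, add_zero, natDegree_C]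
      refine le_trans (add_le_add_left (natDegree_prod_le _ _) 0) ?_
      simp only [add_zero]
      refine le_trans (Finset.sum_le_sum (fun k _ => hfac _ _)) ?_
      simp
    have hm1 : m - 1 = (q + i) + 1 := by omega
    rw [mul_assoc, coeff_C_mul, sub_mul, coeff_sub]
    have hx1 : (X ^ p * B2).coeff (m - 1) = 0 := by
      rw [mul_comm, coeff_mul_X_pow', if_neg (by omega)]
    have hx2 : (X * B2).coeff (m - 1) = B2.coeff (q + i) := by
      rw [mul_comm, hm1, coeff_mul_X]
    rw [hx1, hx2, coeff_eq_zero_of_natDegree_lt (by omega : B2.natDegree < q + i)]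
    ring
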